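/- Let A ∈ B(H) be a bounded operator on a Hilbert space, and set Ã := sgn((A + A*)/2) via Borel functional calculus, where sgn(t) = 1 for t ≥ 0 and −1 for t < 0. Then Ã is a unitary involution (Ã* = Ã, Ã² = Id). Moreover, if ξ ∈ H and ε ≥ 0 satisfy ‖(A² − Id)ξ‖ ≤ ε, ‖((A*)² − Id)ξ‖ ≤ ε, ‖(AA* − Id)ξ‖ ≤ ε, ‖(A*A − Id)ξ‖ ≤ ε, and ‖(A − A*)ξ‖ ≤ ε, then ‖(A − Ã)ξ‖ ≤ 2ε and ‖(A* − Ã)ξ‖ ≤ 2ε. -/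

import Mathlib

section AuxCommute

variable {H : Type*} [NormedAddCommGroup H] [InnerProductSpace ℂ H] [CompleteSpace H]

/-- If `C` commutes with a selfadjoint operator `B`, then it commutes with `cfc f B`. -/
lemma commute_cfc_aux' {B C : H →L[ℂ] H} (hB : IsSelfAdjoint B) (hC : C * B = B * C)
    (f : ℝ → ℝ) : C * cfc f B = cfc f B * C := by
  by_cases hf : ContinuousOn f (spectrum ℝ B)
  · rw [cfc_apply f B hB hf]
    have hcont : Continuous (cfcHom hB (R := ℝ)) := (cfcHom_isClosedEmbedding hB).continuous
    have key : ∀ g : C(spectrum ℝ B, ℝ), C * cfcHom hB g = cfcHom hB g * C := by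
      intro g
      induction g using ContinuousMap.induction_on_of_compact with
      | const r =>
        have h : (ContinuousMap.const (spectrum ℝ B) r) = algebraMap ℝ C(spectrum ℝ B, ℝ) r := rfl
        rw [h, AlgHomClass.commutes]
        exact (Algebra.commutes r C).symm
      | id => rw [cfcHom_id hB]; exact hC
      | star_id =>
        have h : star (ContinuousMap.restrict (spectrum ℝ B) (ContinuousMap.id ℝ))
            = ContinuousMap.restrict (spectrum ℝ B) (ContinuousMap.id ℝ) := by ext x; simp
        rw [h, cfcHom_id hB]; exact hC
      | add f g hf hg => rw [map_add, mul_add, add_mul, hf, hg]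
      | mul f g hf hg => rw [map_mul, ← mul_assoc, hf, mul_assoc, hg, mul_assoc]
      | frequently f hf =>
        have hcl : IsClosed {g : C(spectrum ℝ B, ℝ) | C * cfcHom hB g = cfcHom hB g * C} :=
          isClosed_eq ((continuous_mul_left C).comp hcont) ((continuous_mul_right C).comp hcont)
        exact hcl.closure_subset hf.mem_closure
    exact key _
  · rw [cfc_apply_of_not_continuousOn B hf, mul_zero, zero_mul]

end AuxCommute

set_option maxHeartbeats 1000000 in
/-- For any bounded operator `A ∈ B(H)` on a complex Hilbert space, the operator
`Ã := sgn((A + A*)/2)` (defined by Borel functional calculus, so lying in the von Neumann algebra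
`C*⟨A⟩'' `, here expressed as the double centralizer of `{A, A*}`) is a unitary involution, and
whenever a vector `ξ` satisfies `‖(A² − 1)ξ‖ ≤ ε`, `‖((A*)² − 1)ξ‖ ≤ ε`, `‖(AA* − 1)ξ‖ ≤ ε`,
`‖(A*A − 1)ξ‖ ≤ ε` and `‖(A − A*)ξ‖ ≤ ε`, one has `‖(A − Ã)ξ‖ ≤ 2ε` and `‖(A* − Ã)ξ‖ ≤ 2ε`. -/
theorem sign_of_real_part_is_unitary_involution_and_approximates
    {H : Type*} [NormedAddCommGroup H] [InnerProductSpace ℂ H] [CompleteSpace H]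
    (A : H →L[ℂ] H) :
    ∃ Atilde : H →L[ℂ] H,
      star Atilde = Atilde ∧
      Atilde * Atilde = 1 ∧
      Atilde ∈ Set.centralizer (Set.centralizer {A, star A}) ∧
      ∀ (ξ : H) (ε : ℝ), 0 ≤ ε →
        ‖(A * A - 1) ξ‖ ≤ ε →
        ‖(star A * star A - 1) ξ‖ ≤ ε →
        ‖(A * star A - 1) ξ‖ ≤ ε →
        ‖(star A * A - 1) ξ‖ ≤ ε →
        ‖(A - star A) ξ‖ ≤ ε →
        ‖(A - Atilde) ξ‖ ≤ 2 * ε ∧ ‖(star A - Atilde) ξ‖ ≤ 2 * ε := by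
  classical
  set B : H →L[ℂ] H := (2:ℂ)⁻¹ • (A + star A) with hBdef
  have hB : IsSelfAdjoint B := by
    rw [hBdef]
    refine IsSelfAdjoint.smul ?_ (IsSelfAdjoint.add_star_self A)
    show star ((2:ℂ)⁻¹) = (2:ℂ)⁻¹
    rw [star_inv₀]
    norm_num
  set fneg : ℝ → ℝ := fun t => max (-t) 0 with hfneg
  set fpos : ℝ → ℝ := fun t => max t 0 with hfpos
  have hfnegc : ContinuousOn fneg (spectrum ℝ B) :=
    (continuous_neg.max continuous_const).continuousOn
  have hfposc : ContinuousOn fpos (spectrum ℝ B) :=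
    (continuous_id.max continuous_const).continuousOn
  set Bneg := cfc fneg B with hBnegdef
  set Bpos := cfc fpos B with hBposdef
  have hBneg_sa : IsSelfAdjoint Bneg := cfc_predicate _ _
  have hBpos_sa : IsSelfAdjoint Bpos := cfc_predicate _ _
  have hsplit : Bpos - Bneg = B := by
    rw [hBnegdef, hBposdef, ← cfc_sub _ _ B hfposc hfnegc]
    calc cfc (fun t => fpos t - fneg t) B = cfc (fun t : ℝ => t) B := by
          apply cfc_congr; intro t _
          rcases le_total t 0 with h | h <;>
            simp [hfpos, hfneg, max_eq_left, max_eq_right, h, neg_nonneg] <;> linarith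
      _ = B := cfc_id' ℝ B
  have hmul0 : Bneg * Bpos = 0 := by
    rw [hBnegdef, hBposdef, ← cfc_mul _ _ B hfnegc hfposc]
    calc cfc (fun t => fneg t * fpos t) B = cfc (fun _ : ℝ => (0:ℝ)) B := by
          apply cfc_congr; intro t _
          rcases le_total t 0 with h | h <;>
            simp [hfpos, hfneg, max_eq_left, max_eq_right, h, neg_nonneg] <;> linarith
      _ = 0 := by simp
  -- the spectral subspace and projection
  set K : Submodule ℂ H := (LinearMap.range (Bneg : H →ₗ[ℂ] H)).topologicalClosure with hK
  haveI : CompleteSpace K := (Submodule.isClosed_topologicalClosure _).completeSpace_coe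
  set P : H →L[ℂ] H := K.subtypeL ∘L K.orthogonalProjectionOnto with hP
  have hPsa : IsSelfAdjoint P := isSelfAdjoint_starProjection K
  have hPmem : ∀ x ∈ K, P x = x := fun x hx => by
    show (K.orthogonalProjectionOnto x : H) = x
    exact Submodule.starProjection_eq_self_iff.mpr hx
  have hPapp : ∀ x : H, P x ∈ K := fun x => Submodule.coe_mem _
  have hPperp : ∀ x ∈ Kᗮ, P x = 0 := by
    intro x hx
    show (K.subtypeL : K →L[ℂ] H) (K.orthogonalProjectionOnto x) = 0
    rw [Submodule.orthogonalProjectionOnto_apply_of_mem_orthogonal hx]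
    simp
  have hPidem : P * P = P := by
    ext x; exact hPmem _ (hPapp x)
  have hmemK : ∀ x, Bneg x ∈ K := fun x => Submodule.le_topologicalClosure _ ⟨x, rfl⟩
  have hPBneg : P * Bneg = Bneg := by ext x; exact hPmem _ (hmemK x)
  have hBsym := ContinuousLinearMap.isSelfAdjoint_iff_isSymmetric.mp hBneg_sa
  have hperp : ∀ x, Bpos x ∈ Kᗮ := by
    intro x
    rw [Submodule.mem_orthogonal]
    intro u hu
    have hcl : closure (LinearMap.range (Bneg : H →ₗ[ℂ] H) : Set H)
        ⊆ {u | inner (𝕜 := ℂ) u (Bpos x) = 0} := by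
      apply closure_minimal
      · rintro _ ⟨y, rfl⟩
        show inner (𝕜 := ℂ) (Bneg y) (Bpos x) = 0
        calc inner (𝕜 := ℂ) (Bneg y) (Bpos x)
            = inner (𝕜 := ℂ) y (Bneg (Bpos x)) := hBsym y (Bpos x)
          _ = inner (𝕜 := ℂ) y ((Bneg * Bpos) x) := rfl
          _ = 0 := by rw [hmul0]; simp
      · exact isClosed_eq (continuous_id.inner continuous_const) continuous_const
    exact hcl hu
  have hPBpos : P * Bpos = 0 := by
    ext x; exact hPperp _ (hperp x)
  have hPB : P * B = -Bneg := by rw [← hsplit, mul_sub, hPBpos, hPBneg, zero_sub]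
  have hBP : B * P = -Bneg := by
    have h := congrArg star hPB
    rwa [star_mul, hPsa.star_eq, hB.star_eq, star_neg, hBneg_sa.star_eq] at h
  -- the candidate operator
  set T : H →L[ℂ] H := 1 - P - P with hT
  have hTsa : IsSelfAdjoint T := by
    rw [hT]
    exact (((IsSelfAdjoint.one (R := H →L[ℂ] H)).sub hPsa).sub hPsa)
  have hTinv : T * T = 1 := by
    rw [hT]
    simp only [sub_mul, mul_sub, one_mul, mul_one, hPidem]
    abel
  -- operator-square identities
  have hM2 : (B - T) * (B - T) = B*B - B - B + 1 - Bneg - Bneg - Bneg - Bneg := by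
    have h1 : B - T = B - 1 + P + P := by rw [hT]; abel
    rw [h1]
    simp only [add_mul, mul_add, sub_mul, mul_sub, one_mul, mul_one, hPidem, hPB, hBP]
    abel
  -- cfc computations
  have cId : cfc (fun t : ℝ => t) B = B := cfc_id' ℝ B
  have cOne : cfc (fun _ : ℝ => (1:ℝ)) B = 1 := cfc_const_one ℝ B
  have cSq : cfc (fun t : ℝ => t*t) B = B*B := by
    rw [cfc_mul (fun t : ℝ => t) (fun t : ℝ => t) B (by fun_prop) (by fun_prop), cId]
  have cN : cfc (fun t : ℝ => 1 - t*t) B = 1 - B*B := by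
    rw [cfc_sub (fun _ : ℝ => (1:ℝ)) (fun t : ℝ => t*t) B (by fun_prop) (by fun_prop), cSq, cOne]
  have cNN : cfc (fun t : ℝ => (1 - t*t)*(1 - t*t)) B = (1 - B*B)*(1 - B*B) := by
    rw [cfc_mul (fun t : ℝ => 1 - t*t) (fun t : ℝ => 1 - t*t) B (by fun_prop) (by fun_prop), cN]
  have cPoly : cfc (fun t : ℝ => t*t - t - t + 1) B = B*B - B - B + 1 := by
    rw [cfc_add B (fun t : ℝ => t*t - t - t) (fun _ : ℝ => (1:ℝ)) (by fun_prop) (by fun_prop),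
      cfc_sub (fun t : ℝ => t*t - t) (fun t : ℝ => t) B (by fun_prop) (by fun_prop),
      cfc_sub (fun t : ℝ => t*t) (fun t : ℝ => t) B (by fun_prop) (by fun_prop),
      cSq, cId, cOne]
  have hfneg4c : ContinuousOn (fun t => fneg t + fneg t + fneg t + fneg t) (spectrum ℝ B) :=
    ((hfnegc.add hfnegc).add hfnegc).add hfnegc
  have c4neg : cfc (fun t => fneg t + fneg t + fneg t + fneg t) B
      = Bneg + Bneg + Bneg + Bneg := by
    rw [cfc_add B (fun t : ℝ => fneg t + fneg t + fneg t) (fun t : ℝ => fneg t)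
        ((hfnegc.add hfnegc).add hfnegc) hfnegc,
      cfc_add B (fun t : ℝ => fneg t + fneg t) (fun t : ℝ => fneg t) (hfnegc.add hfnegc) hfnegc,
      cfc_add B (fun t : ℝ => fneg t) (fun t : ℝ => fneg t) hfnegc hfnegc, ← hBnegdef]
  set q : ℝ → ℝ := fun t =>
    (1 - t*t)*(1 - t*t) - ((t*t - t - t + 1) - (fneg t + fneg t + fneg t + fneg t)) with hq
  have cq : cfc q B = (1 - B*B)*(1 - B*B)
      - ((B*B - B - B + 1) - (Bneg + Bneg + Bneg + Bneg)) := by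
    rw [hq, cfc_sub (fun t : ℝ => (1 - t*t)*(1 - t*t))
        (fun t : ℝ => (t*t - t - t + 1) - (fneg t + fneg t + fneg t + fneg t)) B
        (by fun_prop)
        ((ContinuousOn.sub (by fun_prop) hfneg4c)),
      cfc_sub (fun t : ℝ => t*t - t - t + 1) (fun t : ℝ => fneg t + fneg t + fneg t + fneg t) B
        (by fun_prop) hfneg4c,
      cNN, cPoly, c4neg]
  have hq0 : ∀ t ∈ spectrum ℝ B, 0 ≤ q t := by
    intro t _
    simp only [hq]
    rcases le_total t 0 with h | h
    · have hfnegval : fneg t = -t := by rw [hfneg]; simp [max_eq_left, neg_nonneg.mpr h]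
      rw [hfnegval]
      have h1 : 0 ≤ (-t) * (2 - t) * (t + 1)^2 :=
        mul_nonneg (mul_nonneg (by linarith) (by linarith)) (sq_nonneg _)
      have h2 : (1 - t*t)*(1 - t*t) - ((t*t - t - t + 1) - (-t + -t + -t + -t))
          = (-t) * (2 - t) * (t + 1)^2 := by ring
      linarith [h1, h2.ge, h2.le]
    · have hfnegval : fneg t = 0 := by rw [hfneg]; simp [max_eq_right, neg_nonpos.mpr h]
      rw [hfnegval]
      have h1 : 0 ≤ t * (t + 2) * (t - 1)^2 :=
        mul_nonneg (mul_nonneg h (by linarith)) (sq_nonneg _)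
      have h2 : (1 - t*t)*(1 - t*t) - ((t*t - t - t + 1) - ((0:ℝ) + 0 + 0 + 0))
          = t * (t + 2) * (t - 1)^2 := by ring
      linarith [h1, h2.ge, h2.le]
  -- the key positivity
  have hkey : (1 - B*B)*(1 - B*B) - (B - T)*(B - T) = cfc q B := by
    rw [hM2, cq]; abel
  have hpos : (0 : H →L[ℂ] H) ≤ (1 - B*B)*(1 - B*B) - (B - T)*(B - T) := by
    rw [hkey]; exact cfc_nonneg hq0
  -- the pointwise norm comparison
  have hMsa : IsSelfAdjoint (B - T) := hB.sub hTsa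
  have keyNorm : ∀ ξ : H, ‖(B - T) ξ‖ ≤ ‖((1 : H →L[ℂ] H) - B*B) ξ‖ := by
    intro ξ
    have hp := (ContinuousLinearMap.nonneg_iff_isPositive _).mp hpos
    have h2 := hp.inner_nonneg_left ξ
    have hNsa : IsSelfAdjoint ((1 : H →L[ℂ] H) - B*B) := by
      have hBB2 : IsSelfAdjoint (B * B) := by
        rw [show B * B = B ^ 2 from (sq B).symm]
        exact hB.pow 2
      exact (IsSelfAdjoint.one (R := H →L[ℂ] H)).sub hBB2
    have hMsym := ContinuousLinearMap.isSelfAdjoint_iff_isSymmetric.mp hMsa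
    have hNsym := ContinuousLinearMap.isSelfAdjoint_iff_isSymmetric.mp hNsa
    have e1 : RCLike.re (inner (𝕜 := ℂ) (((B - T)*(B - T)) ξ) ξ) = ‖(B - T) ξ‖^2 := by
      have h : inner (𝕜 := ℂ) (((B - T)*(B - T)) ξ) ξ
          = inner (𝕜 := ℂ) ((B - T) ξ) ((B - T) ξ) := hMsym ((B - T) ξ) ξ
      rw [h, inner_self_eq_norm_sq]
    have e2 : RCLike.re (inner (𝕜 := ℂ) ((((1 : H →L[ℂ] H) - B*B)*((1 : H →L[ℂ] H) - B*B)) ξ) ξ)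
        = ‖((1 : H →L[ℂ] H) - B*B) ξ‖^2 := by
      have h : inner (𝕜 := ℂ) ((((1 : H →L[ℂ] H) - B*B)*((1 : H →L[ℂ] H) - B*B)) ξ) ξ
          = inner (𝕜 := ℂ) (((1 : H →L[ℂ] H) - B*B) ξ) (((1 : H →L[ℂ] H) - B*B) ξ) :=
        hNsym (((1 : H →L[ℂ] H) - B*B) ξ) ξ
      rw [h, inner_self_eq_norm_sq]
    have hsub : RCLike.re (inner (𝕜 := ℂ)
        (((1 - B*B)*(1 - B*B) - (B - T)*(B - T)) ξ) ξ)
        = ‖((1 : H →L[ℂ] H) - B*B) ξ‖^2 - ‖(B - T) ξ‖^2 := by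
      rw [ContinuousLinearMap.sub_apply, inner_sub_left, map_sub, e1, e2]
    replace h2 := (RCLike.nonneg_iff.mp h2).1
    rw [hsub] at h2
    have hsq : ‖(B - T) ξ‖^2 ≤ ‖((1 : H →L[ℂ] H) - B*B) ξ‖^2 := by linarith
    calc ‖(B - T) ξ‖ = Real.sqrt (‖(B - T) ξ‖^2) := (Real.sqrt_sq (norm_nonneg _)).symm
      _ ≤ Real.sqrt (‖((1 : H →L[ℂ] H) - B*B) ξ‖^2) := Real.sqrt_le_sqrt hsq
      _ = ‖((1 : H →L[ℂ] H) - B*B) ξ‖ := Real.sqrt_sq (norm_nonneg _)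
  -- membership in the double centralizer
  have hcent : T ∈ Set.centralizer (Set.centralizer {A, star A}) := by
    rw [Set.mem_centralizer_iff]
    intro C hC
    have hCA : A * C = C * A := hC A (Set.mem_insert _ _)
    have hCA' : star A * C = C * star A := hC (star A) (Set.mem_insert_of_mem _ rfl)
    have hCB : C * B = B * C := by
      rw [hBdef]
      simp only [mul_smul_comm, smul_mul_assoc, mul_add, add_mul, hCA, hCA']
    have hC'B : star C * B = B * star C := by
      have h := congrArg star hCB
      rw [star_mul, star_mul, hB.star_eq] at h
      exact h.symm
    have hCBneg : C * Bneg = Bneg * C := commute_cfc_aux' hB hCB fneg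
    have hC'Bneg : star C * Bneg = Bneg * star C := commute_cfc_aux' hB hC'B fneg
    have hDK : ∀ D : H →L[ℂ] H, D * Bneg = Bneg * D → ∀ x ∈ K, D x ∈ K := by
      intro D hD x hx
      have him : D '' (LinearMap.range (Bneg : H →ₗ[ℂ] H) : Set H)
          ⊆ (LinearMap.range (Bneg : H →ₗ[ℂ] H) : Set H) := by
        rintro _ ⟨_, ⟨y, rfl⟩, rfl⟩
        refine ⟨D y, ?_⟩
        have h := congrFun (congrArg DFunLike.coe hD) y
        simpa [ContinuousLinearMap.mul_apply] using h.symm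
      have hx' : x ∈ closure (LinearMap.range (Bneg : H →ₗ[ℂ] H) : Set H) := hx
      have h1 : D x ∈ D '' closure (LinearMap.range (Bneg : H →ₗ[ℂ] H) : Set H) :=
        ⟨x, hx', rfl⟩
      have h2 : D '' closure (LinearMap.range (Bneg : H →ₗ[ℂ] H) : Set H)
          ⊆ closure (D '' (LinearMap.range (Bneg : H →ₗ[ℂ] H) : Set H)) :=
        image_closure_subset_closure_image D.continuous
      exact (closure_mono him) (h2 h1)
    have hCperp : ∀ v ∈ Kᗮ, C v ∈ Kᗮ := by
      intro v hv
      rw [Submodule.mem_orthogonal]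
      intro u hu
      have h1 : inner (𝕜 := ℂ) u (C v) = inner (𝕜 := ℂ) ((star C) u) v := by
        rw [ContinuousLinearMap.star_eq_adjoint]
        exact (ContinuousLinearMap.adjoint_inner_left C v u).symm
      rw [h1]
      exact (Submodule.mem_orthogonal K v).mp hv _ (hDK (star C) hC'Bneg u hu)
    have hCP : C * P = P * C := by
      ext x
      show C (P x) = P (C x)
      have hxdecomp : C x = C (P x) + C (x - P x) := by rw [← map_add]; congr 1; abel
      have h1 : P (C (P x)) = C (P x) := hPmem _ (hDK C hCBneg _ (hPapp x))
      have h2 : x - P x ∈ Kᗮ := Submodule.sub_starProjection_mem_orthogonal x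
      have h3 : P (C (x - P x)) = 0 := hPperp _ (hCperp _ h2)
      rw [hxdecomp, map_add, h1, h3, add_zero]
    rw [hT]
    simp only [mul_sub, sub_mul, mul_one, one_mul, hCP]
  -- the quantitative estimates
  refine ⟨T, hTsa.star_eq, hTinv, hcent, ?_⟩
  intro ξ ε hε h1 h2 h3 h4 h5
  have hBB : B * B = (4:ℂ)⁻¹ • (A*A + A*(star A) + (star A)*A + (star A)*(star A)) := by
    rw [hBdef, smul_mul_smul_comm]
    rw [show ((2:ℂ)⁻¹ * (2:ℂ)⁻¹) = (4:ℂ)⁻¹ by norm_num]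
    congr 1
    simp only [add_mul, mul_add]
    abel
  have hNdecomp : (1 : H →L[ℂ] H) - B*B
      = (4:ℂ)⁻¹ • ((1 - A*A) + (1 - A*(star A)) + (1 - (star A)*A) + (1 - (star A)*(star A))) := by
    rw [hBB]; module
  have hnorm4 : ‖(4:ℂ)⁻¹‖ = (4:ℝ)⁻¹ := by
    rw [norm_inv]; norm_num
  have hNbound : ‖((1 : H →L[ℂ] H) - B*B) ξ‖ ≤ ε := by
    rw [hNdecomp]
    rw [ContinuousLinearMap.smul_apply, norm_smul, hnorm4]
    simp only [ContinuousLinearMap.add_apply]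
    have e1 : ‖((1 - A*A : H →L[ℂ] H)) ξ‖ ≤ ε := by
      rw [show ((1 : H →L[ℂ] H) - A*A) = -(A*A - 1) from (neg_sub _ _).symm,
        ContinuousLinearMap.neg_apply, norm_neg]
      simpa using h1
    have e2 : ‖((1 - A*(star A) : H →L[ℂ] H)) ξ‖ ≤ ε := by
      rw [show ((1 : H →L[ℂ] H) - A*(star A)) = -(A*(star A) - 1) from (neg_sub _ _).symm,
        ContinuousLinearMap.neg_apply, norm_neg]
      simpa using h3
    have e3 : ‖((1 - (star A)*A : H →L[ℂ] H)) ξ‖ ≤ ε := by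
      rw [show ((1 : H →L[ℂ] H) - (star A)*A) = -((star A)*A - 1) from (neg_sub _ _).symm,
        ContinuousLinearMap.neg_apply, norm_neg]
      simpa using h4
    have e4 : ‖((1 - (star A)*(star A) : H →L[ℂ] H)) ξ‖ ≤ ε := by
      rw [show ((1 : H →L[ℂ] H) - (star A)*(star A)) = -((star A)*(star A) - 1) from
        (neg_sub _ _).symm, ContinuousLinearMap.neg_apply, norm_neg]
      simpa using h2
    have hsum : ‖((1 - A*A : H →L[ℂ] H)) ξ + ((1 - A*(star A) : H →L[ℂ] H)) ξ
        + ((1 - (star A)*A : H →L[ℂ] H)) ξ + ((1 - (star A)*(star A) : H →L[ℂ] H)) ξ‖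
        ≤ ε + ε + ε + ε := by
      calc ‖((1 - A*A : H →L[ℂ] H)) ξ + ((1 - A*(star A) : H →L[ℂ] H)) ξ
          + ((1 - (star A)*A : H →L[ℂ] H)) ξ + ((1 - (star A)*(star A) : H →L[ℂ] H)) ξ‖
          ≤ ‖((1 - A*A : H →L[ℂ] H)) ξ + ((1 - A*(star A) : H →L[ℂ] H)) ξ
            + ((1 - (star A)*A : H →L[ℂ] H)) ξ‖
            + ‖((1 - (star A)*(star A) : H →L[ℂ] H)) ξ‖ := norm_add_le _ _
        _ ≤ (‖((1 - A*A : H →L[ℂ] H)) ξ + ((1 - A*(star A) : H →L[ℂ] H)) ξ‖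
            + ‖((1 - (star A)*A : H →L[ℂ] H)) ξ‖)
            + ‖((1 - (star A)*(star A) : H →L[ℂ] H)) ξ‖ := by
            gcongr; exact norm_add_le _ _
        _ ≤ ((‖((1 - A*A : H →L[ℂ] H)) ξ‖ + ‖((1 - A*(star A) : H →L[ℂ] H)) ξ‖)
            + ‖((1 - (star A)*A : H →L[ℂ] H)) ξ‖)
            + ‖((1 - (star A)*(star A) : H →L[ℂ] H)) ξ‖ := by
            gcongr; exact norm_add_le _ _
        _ ≤ ε + ε + ε + ε := by gcongr
    calc (4:ℝ)⁻¹ * ‖((1 - A*A : H →L[ℂ] H)) ξ + ((1 - A*(star A) : H →L[ℂ] H)) ξ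
        + ((1 - (star A)*A : H →L[ℂ] H)) ξ + ((1 - (star A)*(star A) : H →L[ℂ] H)) ξ‖
        ≤ (4:ℝ)⁻¹ * (ε + ε + ε + ε) := by gcongr
      _ = ε := by ring
  have hnorm2 : ‖(2:ℂ)⁻¹‖ = (2:ℝ)⁻¹ := by rw [norm_inv]; norm_num
  have hABdiff : A - B = (2:ℂ)⁻¹ • (A - star A) := by rw [hBdef]; module
  have hA'Bdiff : star A - B = (2:ℂ)⁻¹ • (star A - A) := by rw [hBdef]; module
  have hABapp : ‖(A - B) ξ‖ ≤ 2⁻¹ * ε := by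
    rw [hABdiff, ContinuousLinearMap.smul_apply, norm_smul, hnorm2]
    gcongr
  have hA'Bapp : ‖(star A - B) ξ‖ ≤ 2⁻¹ * ε := by
    rw [hA'Bdiff, ContinuousLinearMap.smul_apply, norm_smul, hnorm2]
    have : (star A - A) ξ = -((A - star A) ξ) := by
      rw [show star A - A = -(A - star A) from (neg_sub _ _).symm]; simp
    rw [this, norm_neg]
    gcongr
  have hBT : ‖(B - T) ξ‖ ≤ ε := le_trans (keyNorm ξ) hNbound
  constructor
  · have hsplit2 : (A - T) ξ = (A - B) ξ + (B - T) ξ := by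
      rw [← ContinuousLinearMap.add_apply]; congr 1; abel
    calc ‖(A - T) ξ‖ = ‖(A - B) ξ + (B - T) ξ‖ := by rw [hsplit2]
      _ ≤ ‖(A - B) ξ‖ + ‖(B - T) ξ‖ := norm_add_le _ _
      _ ≤ 2⁻¹ * ε + ε := add_le_add hABapp hBT
      _ ≤ 2 * ε := by linarith
  · have hsplit2 : (star A - T) ξ = (star A - B) ξ + (B - T) ξ := by
      rw [← ContinuousLinearMap.add_apply]; congr 1; abel
    calc ‖(star A - T) ξ‖ = ‖(star A - B) ξ + (B - T) ξ‖ := by rw [hsplit2]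
      _ ≤ ‖(star A - B) ξ‖ + ‖(B - T) ξ‖ := norm_add_le _ _
      _ ≤ 2⁻¹ * ε + ε := add_le_add hA'Bapp hBT
      _ ≤ 2 * ε := by linarith
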